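/- Let R = ⊕_{n≥0} R_n be an N-graded ring of characteristic p, q = p^e, and define R^{(e)} as R with right R-action r * b = r b^q. For a graded R-module M, the assignment deg(r ⊗ m) = deg(r) + q·deg(m) gives a well-defined Z-grading on R^{(e)} ⊗_R M. -/

import Mathlib

open scoped TensorProduct

set_option maxHeartbeats 1000000
set_option synthInstance.maxHeartbeats 400000

/-- `R^{(e)}`: the ring `R` viewed as a (right) `R`-module via `r * b = r b^q`, `q = p^e`,
i.e. `b • r = b^{p^e} r`. -/
def FrobeniusModule (R : Type*) [CommRing R] (p e : ℕ) [ExpChar R p] : Type _ := R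

noncomputable instance (R : Type*) [CommRing R] (p e : ℕ) [ExpChar R p] :
    AddCommGroup (FrobeniusModule R p e) :=
  inferInstanceAs (AddCommGroup R)

noncomputable instance (R : Type*) [CommRing R] (p e : ℕ) [ExpChar R p] :
    Module R (FrobeniusModule R p e) :=
  Module.compHom R (iterateFrobenius R p e)

/-- An element of `R` viewed in `FrobeniusModule R p e`. -/
def FrobeniusModule.of {R : Type*} [CommRing R] (p e : ℕ) [ExpChar R p] (r : R) :
    FrobeniusModule R p e := r

section Aux

open DirectSum

variable (R : Type*) [CommRing R] (p : ℕ) [Fact p.Prime] [CharP R p] (e : ℕ)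
  (𝒜 : ℕ → AddSubgroup R) [GradedRing 𝒜]
  (M : Type*) [AddCommGroup M] [Module R M]
  (ℳ : ℤ → AddSubgroup M) [DirectSum.Decomposition ℳ]

/-- The underlying element of `R` of an element of `FrobeniusModule R p e`. -/
def unFrob : FrobeniusModule R p e → R := fun r => r

lemma unFrob_of (r : R) : unFrob R p e (FrobeniusModule.of p e r) = r := rfl

lemma of_unFrob (r : FrobeniusModule R p e) : FrobeniusModule.of p e (unFrob R p e r) = r := rfl

/-- The additive equivalence between `R` and `FrobeniusModule R p e`. -/
def frobAddEquiv : R ≃+ FrobeniusModule R p e :=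
  { toFun := FrobeniusModule.of p e
    invFun := unFrob R p e
    left_inv := fun _ => rfl
    right_inv := fun _ => rfl
    map_add' := fun _ _ => rfl }

lemma frob_smul (b r : R) :
    b • FrobeniusModule.of p e r = FrobeniusModule.of p e (b ^ p ^ e * r) := by
  show iterateFrobenius R p e b * r = b ^ p ^ e * r
  rw [iterateFrobenius_def]

/-- The degree function: `deg (r ⊗ m) = deg r + p^e · deg m`. -/
def fdeg (i : ℕ) (j : ℤ) : ℤ := (i : ℤ) + (p : ℤ) ^ e * j

/-- The elementary bi-additive map on homogeneous pieces. -/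
noncomputable def phiHom (i : ℕ) (j : ℤ) :
    𝒜 i →+ (ℳ j →+ ⨁ _ : ℤ, FrobeniusModule R p e ⊗[R] M) :=
  AddMonoidHom.mk'
    (fun r => AddMonoidHom.mk'
      (fun m => DirectSum.of (fun _ : ℤ => FrobeniusModule R p e ⊗[R] M) (fdeg p e i j)
        (FrobeniusModule.of p e (r : R) ⊗ₜ[R] (m : M)))
      (fun m m' => by
        simp only [AddSubgroup.coe_add, TensorProduct.tmul_add, map_add]))
    (fun r r' => by
      ext m
      have h1 : FrobeniusModule.of p e ((r : R) + (r' : R)) =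
          FrobeniusModule.of p e (r : R) + FrobeniusModule.of p e (r' : R) := rfl
      simp only [AddMonoidHom.mk'_apply, AddMonoidHom.add_apply, AddSubgroup.coe_add, h1,
        TensorProduct.add_tmul, map_add])

/-- The bi-additive map on the direct sums. -/
noncomputable def PhiHom :
    (⨁ i : ℕ, 𝒜 i) →+ ((⨁ j : ℤ, ℳ j) →+ ⨁ _ : ℤ, FrobeniusModule R p e ⊗[R] M) :=
  DirectSum.toAddMonoid fun i =>
    AddMonoidHom.mk'
      (fun r => DirectSum.toAddMonoid fun j => phiHom R p e 𝒜 M ℳ i j r)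
      (fun r r' => by
        refine DirectSum.addHom_ext fun j m => ?_
        simp only [DirectSum.toAddMonoid_of, AddMonoidHom.add_apply, map_add])

/-- The degree-decomposing bi-additive map `R × M → ⨁ₙ (R^{(e)} ⊗ M)`. -/
noncomputable def FHom : R →+ (M →+ ⨁ _ : ℤ, FrobeniusModule R p e ⊗[R] M) :=
  AddMonoidHom.mk'
    (fun r => (PhiHom R p e 𝒜 M ℳ (DirectSum.decompose 𝒜 r)).comp
      (DirectSum.decomposeAddEquiv ℳ).toAddMonoidHom)
    (fun r r' => by
      ext m
      simp only [AddMonoidHom.coe_comp, Function.comp_apply, AddMonoidHom.add_apply,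
        DirectSum.decompose_add, map_add, AddMonoidHom.add_apply])

lemma FHom_of_mem {i : ℕ} {j : ℤ} {r : R} {m : M} (hr : r ∈ 𝒜 i) (hm : m ∈ ℳ j) :
    FHom R p e 𝒜 M ℳ r m =
      DirectSum.of (fun _ : ℤ => FrobeniusModule R p e ⊗[R] M) (fdeg p e i j)
        (FrobeniusModule.of p e r ⊗ₜ[R] m) := by
  have h0 : FHom R p e 𝒜 M ℳ r m =
      PhiHom R p e 𝒜 M ℳ (DirectSum.decompose 𝒜 r) (DirectSum.decompose ℳ m) := rfl
  rw [h0, DirectSum.decompose_of_mem 𝒜 hr, DirectSum.decompose_of_mem ℳ hm]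
  simp only [PhiHom, DirectSum.toAddMonoid_of, AddMonoidHom.mk'_apply, phiHom]

/-- The Frobenius-twisted bi-additive map `R^{(e)} × M → ⨁ₙ (R^{(e)} ⊗ M)`. -/
noncomputable def FHom' : FrobeniusModule R p e →+ (M →+ ⨁ _ : ℤ, FrobeniusModule R p e ⊗[R] M) :=
  (FHom R p e 𝒜 M ℳ).comp (frobAddEquiv R p e).symm.toAddMonoidHom

lemma FHom'_of (r : R) : FHom' R p e 𝒜 M ℳ (FrobeniusModule.of p e r) = FHom R p e 𝒜 M ℳ r := rfl

lemma FHom'_balanced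
    (hmod : ∀ (i : ℕ) (j : ℤ) (r : R) (m : M), r ∈ 𝒜 i → m ∈ ℳ j → r • m ∈ ℳ (i + j))
    (b : R) (r : FrobeniusModule R p e) (m : M) :
    FHom' R p e 𝒜 M ℳ (b • r) m = FHom' R p e 𝒜 M ℳ r (b • m) := by
  induction b using DirectSum.Decomposition.inductionOn 𝒜 generalizing r m with
  | zero => simp only [zero_smul, map_zero, AddMonoidHom.zero_apply]
  | add b b' hb hb' =>
      simp only [add_smul, map_add, AddMonoidHom.add_apply, hb, hb']
  | homogeneous b =>
      obtain ⟨k, hbk⟩ : ∃ k, (b : R) ∈ 𝒜 k := ⟨_, b.2⟩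
      rw [← of_unFrob R p e r]
      generalize unFrob R p e r = a
      induction a using DirectSum.Decomposition.inductionOn 𝒜 generalizing m with
      | zero =>
          have h0 : FrobeniusModule.of p e (0 : R) = 0 := rfl
          simp only [h0, smul_zero, map_zero, AddMonoidHom.zero_apply]
      | add a a' ha ha' =>
          have hadd : FrobeniusModule.of p e ((a : R) + (a' : R)) =
              FrobeniusModule.of p e (a : R) + FrobeniusModule.of p e (a' : R) := rfl
          simp only [hadd, smul_add, map_add, AddMonoidHom.add_apply, ha, ha']
      | homogeneous a =>
          obtain ⟨i, hai⟩ : ∃ i, (a : R) ∈ 𝒜 i := ⟨_, a.2⟩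
          induction m using DirectSum.Decomposition.inductionOn ℳ with
          | zero => simp only [smul_zero, map_zero]
          | add m m' hm hm' => simp only [smul_add, map_add, hm, hm']
          | homogeneous m =>
              obtain ⟨j, hmj⟩ : ∃ j, (m : M) ∈ ℳ j := ⟨_, m.2⟩
              rw [frob_smul, FHom'_of, FHom'_of]
              have hb' : (b : R) ^ p ^ e ∈ 𝒜 (p ^ e * k) := by
                have := SetLike.pow_mem_graded (A := 𝒜) (p ^ e) hbk
                rwa [smul_eq_mul] at this
              have hmul : (b : R) ^ p ^ e * (a : R) ∈ 𝒜 (p ^ e * k + i) :=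
                SetLike.mul_mem_graded hb' hai
              have hsm : (b : R) • (m : M) ∈ ℳ ((k : ℤ) + j) := hmod k j _ _ hbk hmj
              rw [FHom_of_mem R p e 𝒜 M ℳ hmul hmj, FHom_of_mem R p e 𝒜 M ℳ hai hsm]
              have hdeg : fdeg p e (p ^ e * k + i) j = fdeg p e i ((k : ℤ) + j) := by
                simp only [fdeg]; push_cast; ring
              rw [hdeg]
              congr 1
              rw [← frob_smul, TensorProduct.smul_tmul]

/-- The degree-decomposition map on the twisted tensor product. -/
noncomputable def psiHom
    (hmod : ∀ (i : ℕ) (j : ℤ) (r : R) (m : M), r ∈ 𝒜 i → m ∈ ℳ j → r • m ∈ ℳ (i + j)) :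
    FrobeniusModule R p e ⊗[R] M →+ ⨁ _ : ℤ, FrobeniusModule R p e ⊗[R] M :=
  TensorProduct.liftAddHom (FHom' R p e 𝒜 M ℳ) (FHom'_balanced R p e 𝒜 M ℳ hmod)

end Aux

/-- Let `R = ⊕_{n ≥ 0} Rₙ` be an `ℕ`-graded ring of prime characteristic `p`, `q = p^e`,
and `M` a `ℤ`-graded `R`-module.  Then the assignment `deg (r ⊗ m) = deg r + q · deg m`
yields a well-defined `ℤ`-grading on `R^{(e)} ⊗_R M`: there is an internal direct sum
decomposition `G : ℤ → AddSubgroup (R^{(e)} ⊗_R M)` with `r ⊗ m ∈ G (i + q·j)` for every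
homogeneous `r` of degree `i` and `m` of degree `j`. -/
theorem frobeniusModule_tensor_graded
    (R : Type*) [CommRing R] (p : ℕ) [Fact p.Prime] [CharP R p] (e : ℕ)
    (𝒜 : ℕ → AddSubgroup R) [GradedRing 𝒜]
    (M : Type*) [AddCommGroup M] [Module R M]
    (ℳ : ℤ → AddSubgroup M) [DirectSum.Decomposition ℳ]
    (hmod : ∀ (i : ℕ) (j : ℤ) (r : R) (m : M), r ∈ 𝒜 i → m ∈ ℳ j → r • m ∈ ℳ (i + j)) :
    ∃ G : ℤ → AddSubgroup (FrobeniusModule R p e ⊗[R] M),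
      DirectSum.IsInternal G ∧
      ∀ (i : ℕ) (j : ℤ) (r : R) (m : M), r ∈ 𝒜 i → m ∈ ℳ j →
        (FrobeniusModule.of p e r ⊗ₜ[R] m) ∈ G (i + (p : ℤ) ^ e * j) := by
  classical
  set T := FrobeniusModule R p e ⊗[R] M with hT
  let ψ : T →+ DirectSum ℤ fun _ : ℤ => T := psiHom R p e 𝒜 M ℳ hmod
  -- the grading
  let G : ℤ → AddSubgroup T := fun n =>
    { carrier := {x | ψ x = DirectSum.of (fun _ : ℤ => T) n x}
      zero_mem' := by simp
      add_mem' := fun {x y} hx hy => by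
        simp only [Set.mem_setOf_eq] at hx hy ⊢
        rw [map_add, map_add, hx, hy]
      neg_mem' := fun {x} hx => by
        simp only [Set.mem_setOf_eq] at hx ⊢
        rw [map_neg, map_neg, hx] }
  have hψ_tmul : ∀ (i : ℕ) (j : ℤ) (r : R) (m : M), r ∈ 𝒜 i → m ∈ ℳ j →
      ψ (FrobeniusModule.of p e r ⊗ₜ[R] m) =
        DirectSum.of (fun _ : ℤ => T) (fdeg p e i j) (FrobeniusModule.of p e r ⊗ₜ[R] m) := by
    intro i j r m hr hm
    show TensorProduct.liftAddHom _ _ (FrobeniusModule.of p e r ⊗ₜ[R] m) = _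
    rw [TensorProduct.liftAddHom_tmul, FHom'_of, FHom_of_mem R p e 𝒜 M ℳ hr hm]
  have hmemG : ∀ (i : ℕ) (j : ℤ) (r : R) (m : M), r ∈ 𝒜 i → m ∈ ℳ j →
      (FrobeniusModule.of p e r ⊗ₜ[R] m) ∈ G (fdeg p e i j) := by
    intro i j r m hr hm
    exact hψ_tmul i j r m hr hm
  -- generation lemma
  have hgen : ∀ S : AddSubgroup T,
      (∀ (i : ℕ) (j : ℤ) (r : R) (m : M), r ∈ 𝒜 i → m ∈ ℳ j →
        (FrobeniusModule.of p e r ⊗ₜ[R] m) ∈ S) → ∀ x : T, x ∈ S := by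
    intro S hS x
    induction x using TensorProduct.induction_on with
    | zero => exact zero_mem S
    | add x y hx hy => exact add_mem hx hy
    | tmul r m =>
        rw [← of_unFrob R p e r]
        generalize unFrob R p e r = a
        induction a using DirectSum.Decomposition.inductionOn 𝒜 generalizing m with
        | zero =>
            have h0 : FrobeniusModule.of p e (0 : R) = 0 := rfl
            rw [h0, TensorProduct.zero_tmul]
            exact zero_mem S
        | add a a' ha ha' =>
            have hadd : FrobeniusModule.of p e ((a : R) + (a' : R)) =
                FrobeniusModule.of p e (a : R) + FrobeniusModule.of p e (a' : R) := rfl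
            rw [hadd, TensorProduct.add_tmul]
            exact add_mem (ha m) (ha' m)
        | homogeneous a =>
            obtain ⟨i, hai⟩ : ∃ i, (a : R) ∈ 𝒜 i := ⟨_, a.2⟩
            induction m using DirectSum.Decomposition.inductionOn ℳ with
            | zero => rw [TensorProduct.tmul_zero]; exact zero_mem S
            | add m m' hm hm' => rw [TensorProduct.tmul_add]; exact add_mem hm hm'
            | homogeneous m => exact hS i _ _ _ hai m.2
  refine ⟨G, ⟨?_, ?_⟩, fun i j r m hr hm => hmemG i j r m hr hm⟩
  · -- injectivity
    rw [injective_iff_map_eq_zero]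
    intro x hx
    have key : ∀ (y : DirectSum ℤ fun n : ℤ => G n) (n : ℤ),
        (ψ (DirectSum.coeAddMonoidHom G y)) n = ((y n : T)) := by
      intro y
      induction y using DirectSum.induction_on with
      | zero => intro n; simp
      | of k z =>
          intro n
          rw [DirectSum.coeAddMonoidHom_of]
          have hz : ψ (z : T) = DirectSum.of (fun _ : ℤ => T) k (z : T) := z.2
          rw [hz]
          by_cases h : k = n
          · subst h; rw [DirectSum.of_eq_same, DirectSum.of_eq_same]
          · rw [DirectSum.of_eq_of_ne _ _ _ (Ne.symm h), DirectSum.of_eq_of_ne _ _ _ (Ne.symm h),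
              ZeroMemClass.coe_zero]
      | add y y' hy hy' =>
          intro n
          rw [map_add, map_add, DirectSum.add_apply, DirectSum.add_apply, hy, hy',
            AddSubgroup.coe_add]
    refine DFinsupp.ext fun n => ?_
    have := key x n
    rw [hx, map_zero, DirectSum.zero_apply] at this
    exact Subtype.ext this.symm
  · -- surjectivity
    intro x
    have : x ∈ (DirectSum.coeAddMonoidHom G).range := by
      refine hgen (DirectSum.coeAddMonoidHom G).range ?_ x
      intro i j r m hr hm
      exact ⟨DirectSum.of (fun n => G n) (fdeg p e i j) ⟨_, hmemG i j r m hr hm⟩,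
        DirectSum.coeAddMonoidHom_of _ _ _⟩
    exact this
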